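/- arXiv:2304.04757 — 3 statements merged into one kernel-verified Lean document; each statement's English description precedes it below -/
import Mathlib

section
/- There exists a function f from pairs of point configurations to the reals — namely f((b1,b2),(c1,c2)) = ⟨b1 − b2, c1 − c2⟩ for b1,b2,c1,c2 ∈ ℝ³ — such that: (i) f is invariant under simultaneous rigid motions, i.e. f((R b1 + t, R b2 + t),(R c1 + t, R c2 + t)) = f((b1,b2),(c1,c2)) for every rotation R ∈ SO(3) and translation t ∈ ℝ³; and (ii) f cannot be factored through separately-invariant features: there do NOT exist types α, β, functions s : ℝ³×ℝ³ → α and u : ℝ³×ℝ³ → β each invariant under all rigid motions of its own argument, and a function ρ : α × β → ℝ, with f((B),(C)) = ρ(s(B), u(C)) for all B, C. (Witnessed by choosing B, a rotated copy R•B, and C with f(B,C) ≠ f(R•B, C).) -/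
noncomputable section

open scoped RealInnerProductSpace

/-- 3-dimensional Euclidean space. -/
abbrev E3 : Type := EuclideanSpace ℝ (Fin 3)

/-- The cross product on `E3`. -/
def cross3 (v w : E3) : E3 :=
  (WithLp.equiv 2 (Fin 3 → ℝ)).symm
    ![v 1 * w 2 - v 2 * w 1, v 2 * w 0 - v 0 * w 2, v 0 * w 1 - v 1 * w 0]

/-- A linear isometry of `E3` is a rotation if its determinant is `1`. -/
def IsRotation (R : E3 ≃ₗᵢ[ℝ] E3) : Prop :=
  LinearMap.det (R.toLinearEquiv : E3 →ₗ[ℝ] E3) = 1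

/-- Signs for the rotation by π about the third axis. -/
def sgn3 : Fin 3 → ℝ := ![-1, -1, 1]

/-- The linear equivalence negating the first two coordinates. -/
def Rlin : E3 ≃ₗ[ℝ] E3 where
  toFun v := WithLp.toLp 2 (fun i => sgn3 i * v i)
  invFun v := WithLp.toLp 2 (fun i => sgn3 i * v i)
  map_add' x y := by ext i; simp [mul_add]
  map_smul' c x := by ext i; simp [PiLp.smul_apply, smul_eq_mul]; ring
  left_inv v := by ext i; simp [← mul_assoc]; fin_cases i <;> norm_num [sgn3]
  right_inv v := by ext i; simp [← mul_assoc]; fin_cases i <;> norm_num [sgn3]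

/-- The corresponding linear isometry equivalence. -/
def Riso : E3 ≃ₗᵢ[ℝ] E3 :=
  Rlin.isometryOfInner (by
    intro x y
    simp [Rlin, PiLp.inner_apply, RCLike.inner_apply, Fin.sum_univ_three, sgn3]
    try ring)

lemma Riso_rot : LinearMap.det (Riso.toLinearEquiv : E3 →ₗ[ℝ] E3) = 1 := by
  have : (Riso.toLinearEquiv : E3 →ₗ[ℝ] E3) = (Rlin : E3 →ₗ[ℝ] E3) := rfl
  rw [this, ← LinearMap.det_toMatrix (PiLp.basisFun 2 ℝ (Fin 3))]
  rw [Matrix.det_fin_three]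
  simp [LinearMap.toMatrix_apply, Rlin, PiLp.basisFun_apply, Pi.single_apply, sgn3]

theorem stmt_0 :
    ∃ f : (E3 × E3) → (E3 × E3) → ℝ,
      (∀ B C : E3 × E3, f B C = ⟪B.1 - B.2, C.1 - C.2⟫) ∧
      (∀ (R : E3 ≃ₗᵢ[ℝ] E3), IsRotation R → ∀ (t b1 b2 c1 c2 : E3),
          f (R b1 + t, R b2 + t) (R c1 + t, R c2 + t) = f (b1, b2) (c1, c2)) ∧
      ¬ ∃ (α β : Type) (s : E3 × E3 → α) (u : E3 × E3 → β) (ρ : α × β → ℝ),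
          (∀ (R : E3 ≃ₗᵢ[ℝ] E3), IsRotation R → ∀ (t b1 b2 : E3),
              s (R b1 + t, R b2 + t) = s (b1, b2)) ∧
          (∀ (R : E3 ≃ₗᵢ[ℝ] E3), IsRotation R → ∀ (t c1 c2 : E3),
              u (R c1 + t, R c2 + t) = u (c1, c2)) ∧
          (∀ B C : E3 × E3, f B C = ρ (s B, u C)) := by
  refine ⟨fun B C => ⟪B.1 - B.2, C.1 - C.2⟫, fun B C => rfl, ?_, ?_⟩
  · intro R _ t b1 b2 c1 c2
    simp [add_sub_add_right_eq_sub, ← map_sub, R.inner_map_map]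
  · rintro ⟨α, β, s, u, ρ, hs, hu, heq⟩
    set e0 : E3 := EuclideanSpace.single 0 1 with he0
    have h1 : (⟪(e0 : E3) - 0, (e0 : E3) - 0⟫ : ℝ) = 1 := by
      simp [he0, PiLp.inner_apply, RCLike.inner_apply, Fin.sum_univ_three,
        EuclideanSpace.single_apply]
    have h2 : (⟪(Riso e0 + 0) - (Riso 0 + 0), (e0 : E3) - 0⟫ : ℝ) = -1 := by
      simp only [map_zero, add_zero, sub_zero]
      have : Riso e0 = WithLp.toLp 2 (fun i => sgn3 i * e0 i) := rfl
      rw [this]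
      simp [he0, PiLp.inner_apply, RCLike.inner_apply, Fin.sum_univ_three,
        EuclideanSpace.single_apply, sgn3]
    have key := heq (Riso e0 + 0, Riso 0 + 0) (e0, 0)
    rw [hs Riso Riso_rot 0 e0 0] at key
    rw [← heq (e0, 0) (e0, 0)] at key
    simp only at key
    rw [h1, h2] at key
    norm_num at key
end
end

section
/- Let x, y ∈ ℝ³ be linearly independent, let (e1, e2, e3) be the edge frame e1 = (x − y)/‖x − y‖, e2 = (x × y)/‖x × y‖, e3 = e1 × e2, and let v ∈ ℝ³. Then for every orthogonal linear map R of ℝ³ (determinant +1 or −1), the modified scalarization with absolute value on the second coordinate is invariant: ⟨R v, e1(R x, R y)⟩ = ⟨v, e1(x,y)⟩, |⟨R v, e2(R x, R y)⟩| = |⟨v, e2(x,y)⟩|, and ⟨R v, e3(R x, R y)⟩ = ⟨v, e3(x,y)⟩. -/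
noncomputable section

open scoped RealInnerProductSpace

/-- First vector of the LEFTNet edge-wise frame: `(x - y)/‖x - y‖`. -/
def fr1 (x y : E3) : E3 := ‖x - y‖⁻¹ • (x - y)

/-- Second vector of the LEFTNet edge-wise frame: `(x × y)/‖x × y‖`. -/
def fr2 (x y : E3) : E3 := ‖cross3 x y‖⁻¹ • cross3 x y

/-- Third vector of the LEFTNet edge-wise frame: `e1 × e2`. -/
def fr3 (x y : E3) : E3 := cross3 (fr1 x y) (fr2 x y)

lemma inner_cross3 (a b z : E3) :
    ⟪cross3 a b, z⟫ =
      Matrix.det (Matrix.of ![(fun i => a i), (fun i => b i), (fun i => z i)]) := by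
  simp [cross3, PiLp.inner_apply, Fin.sum_univ_three, Matrix.det_fin_three]
  ring

lemma det_pm (R : E3 ≃ₗᵢ[ℝ] E3) :
    LinearMap.det (R.toLinearEquiv : E3 →ₗ[ℝ] E3) = 1 ∨
    LinearMap.det (R.toLinearEquiv : E3 →ₗ[ℝ] E3) = -1 := by
  set e := EuclideanSpace.basisFun (Fin 3) ℝ
  have h := (e.det_to_matrix_orthonormalBasis_real (e.map R))
  have h2 : e.toBasis.det ⇑(e.map R) =
      LinearMap.det (R.toLinearEquiv : E3 →ₗ[ℝ] E3) := by
    have : ⇑(e.map R) = (R.toLinearEquiv : E3 →ₗ[ℝ] E3) ∘ ⇑e.toBasis := by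
      ext i
      simp
    rw [this, Module.Basis.det_comp_basis, Module.Basis.equiv_refl]
    simp
  rw [h2] at h
  exact h

lemma inner_cross3_map (R : E3 ≃ₗᵢ[ℝ] E3) (a b z : E3) :
    ⟪cross3 (R a) (R b), R z⟫ =
      (LinearMap.det (R.toLinearEquiv : E3 →ₗ[ℝ] E3)) * ⟪cross3 a b, z⟫ := by
  set e := (EuclideanSpace.basisFun (Fin 3) ℝ).toBasis with he
  set M : Matrix (Fin 3) (Fin 3) ℝ :=
    LinearMap.toMatrix e e (R.toLinearEquiv : E3 →ₗ[ℝ] E3) with hMdef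
  have hM : ∀ (u : E3) (i : Fin 3), R u i = ∑ j, M i j * u j := by
    intro u i
    have hu : (R.toLinearEquiv : E3 →ₗ[ℝ] E3) u
        = ∑ j, u j • (R (e j)) := by
      conv_lhs => rw [← e.sum_repr u]
      simp [he, Finset.smul_sum, map_sum, OrthonormalBasis.coe_toBasis_repr_apply,
        EuclideanSpace.basisFun_repr]
    have : R u = ∑ j, u j • (R (e j)) := hu
    rw [this]
    have hsum : (∑ j, u j • (R (e j))) i = ∑ j, u j * (R (e j)) i := by
      rw [WithLp.ofLp_sum, Finset.sum_apply]
      simp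
    rw [hsum]
    congr 1; ext j
    rw [hMdef, LinearMap.toMatrix_apply]
    simp [he, mul_comm, OrthonormalBasis.coe_toBasis_repr_apply, EuclideanSpace.basisFun_repr]
  have hrows : (Matrix.of ![(fun i => R a i), (fun i => R b i), (fun i => R z i)])
      = Matrix.of ![(fun i => a i), (fun i => b i), (fun i => z i)] * M.transpose := by
    ext i j
    fin_cases i <;> simp [Matrix.mul_apply, hM, mul_comm]
  rw [inner_cross3, inner_cross3, hrows, Matrix.det_mul, Matrix.det_transpose,
    hMdef, LinearMap.det_toMatrix, mul_comm]

lemma cross3_map (R : E3 ≃ₗᵢ[ℝ] E3) (a b : E3) :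
    cross3 (R a) (R b) =
      (LinearMap.det (R.toLinearEquiv : E3 →ₗ[ℝ] E3)) • R (cross3 a b) := by
  apply ext_inner_right ℝ
  intro w
  have hw : w = R (R.symm w) := (R.apply_symm_apply w).symm
  rw [hw, inner_cross3_map, real_inner_smul_left, R.inner_map_map]

lemma cross3_smul_left (c : ℝ) (a b : E3) :
    cross3 (c • a) b = c • cross3 a b := by
  simp only [cross3]
  ext i
  fin_cases i <;>
    simp [WithLp.equiv_symm_apply, PiLp.toLp_apply, PiLp.smul_apply, smul_eq_mul] <;> ring

lemma cross3_smul_right (c : ℝ) (a b : E3) :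
    cross3 a (c • b) = c • cross3 a b := by
  simp only [cross3]
  ext i
  fin_cases i <;>
    simp [WithLp.equiv_symm_apply, PiLp.toLp_apply, PiLp.smul_apply, smul_eq_mul] <;> ring

theorem stmt_8 (x y : E3) (h : LinearIndependent ℝ ![x, y]) (v : E3)
    (R : E3 ≃ₗᵢ[ℝ] E3) :
    ⟪R v, fr1 (R x) (R y)⟫ = ⟪v, fr1 x y⟫ ∧
    |⟪R v, fr2 (R x) (R y)⟫| = |⟪v, fr2 x y⟫| ∧
    ⟪R v, fr3 (R x) (R y)⟫ = ⟪v, fr3 x y⟫ := by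
  set d := LinearMap.det (R.toLinearEquiv : E3 →ₗ[ℝ] E3) with hd
  have hd2 : d * d = 1 := by
    rcases det_pm R with h1 | h1 <;> rw [← hd] at h1 <;> rw [h1] <;> norm_num
  have habs : |d| = 1 := by
    rcases det_pm R with h1 | h1 <;> rw [← hd] at h1 <;> rw [h1] <;> norm_num
  have h1 : fr1 (R x) (R y) = R (fr1 x y) := by
    rw [fr1, fr1, ← map_sub, R.norm_map, map_smul]
  have h2 : fr2 (R x) (R y) = d • R (fr2 x y) := by
    rw [fr2, fr2, cross3_map R x y, ← hd, norm_smul, R.norm_map, smul_smul, LinearIsometryEquiv.map_smul, smul_smul]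
    congr 1
    rw [Real.norm_eq_abs, habs]
    ring
  have h3 : fr3 (R x) (R y) = R (fr3 x y) := by
    rw [fr3, fr3, h1, h2, cross3_smul_right, cross3_map R, ← hd, smul_smul, hd2, one_smul]
  refine ⟨?_, ?_, ?_⟩
  · rw [h1, R.inner_map_map]
  · rw [h2, real_inner_smul_right, R.inner_map_map, abs_mul, habs, one_mul]
  · rw [h3, R.inner_map_map]
end
end

section
/- Let x_i, x_j, x_k, x_l ∈ ℝ³ be such that the pairs (x_i − x_j, x_i − x_k) and (x_j − x_i, x_j − x_l) are each linearly independent. Define the frame F_i = (e^i_1, e^i_2, e^i_3) by Gram–Schmidt orthonormalization of (x_i − x_j, x_i − x_k) followed by e^i_3 = e^i_1 × e^i_2, and define F_j analogously from (x_j − x_i, x_j − x_l). Then the (3,3) entry of the frame-transition matrix between F_i and F_j satisfies ⟨e^i_3, e^j_3⟩ = ⟨(x_i − x_j) × (x_i − x_k), (x_j − x_i) × (x_j − x_l)⟩ / (‖(x_i − x_j) × (x_i − x_k)‖ · ‖(x_j − x_i) × (x_j − x_l)‖), i.e. it equals the inner product of the unit normals of the planes through (x_k, x_i, x_j) and (x_l,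 x_j, x_i) — the cosine of the torsion (dihedral) angle τ_{ij}. -/
noncomputable section

open scoped RealInnerProductSpace

lemma inner3 (x y : E3) : ⟪x,y⟫ = x 0*y 0 + x 1*y 1 + x 2*y 2 := by
  simp [PiLp.inner_apply, Fin.sum_univ_three]
  ring

lemma norm_cross_sq (u v : E3) : ‖cross3 u v‖^2 = ‖u‖^2*‖v‖^2 - ⟪u,v⟫^2 := by
  rw [← real_inner_self_eq_norm_sq, ← real_inner_self_eq_norm_sq, ← real_inner_self_eq_norm_sq]
  simp only [inner3, cross3]
  simp
  ring

lemma cross3_smul_smul (a b : ℝ) (u v : E3) : cross3 (a•u) (b•v) = (a*b) • cross3 u v := by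
  ext i; fin_cases i <;> simp [cross3] <;> ring

lemma cross3_sub_smul (u v : E3) (c : ℝ) : cross3 u (v - c • u) = cross3 u v := by
  ext i; fin_cases i <;> simp [cross3] <;> ring

lemma key (u v : E3) (h : LinearIndependent ℝ ![u, v]) :
    cross3 (‖u‖⁻¹ • u)
      (‖v - ⟪v, ‖u‖⁻¹ • u⟫ • (‖u‖⁻¹ • u)‖⁻¹ • (v - ⟪v, ‖u‖⁻¹ • u⟫ • (‖u‖⁻¹ • u)))
      = ‖cross3 u v‖⁻¹ • cross3 u v := by
  have hu : u ≠ 0 := by have := h.ne_zero 0; simpa using this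
  have hnu : ‖u‖ ≠ 0 := norm_ne_zero_iff.mpr hu
  set c : ℝ := ⟪v, ‖u‖⁻¹ • u⟫ * ‖u‖⁻¹ with hcdef
  set w : E3 := v - ⟪v, ‖u‖⁻¹ • u⟫ • (‖u‖⁻¹ • u) with hwdef
  have hwc : w = v - c • u := by rw [hwdef, smul_smul]
  have hw : w ≠ 0 := by
    intro h0
    have hv : v = c • u := by rwa [hwc, sub_eq_zero] at h0
    have := (LinearIndependent.pair_iff.mp h) c (-1) (by rw [hv]; module)
    simpa using this.2
  have hsq : (‖u‖:ℝ)^2 ≠ 0 := pow_ne_zero 2 hnu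
  have hc : c = ⟪v, u⟫ / ‖u‖^2 := by
    rw [hcdef, real_inner_smul_right, div_eq_mul_inv, sq, mul_inv]; ring
  have e0 : ⟪w, w⟫ = ‖v‖^2 - 2*c*⟪v, u⟫ + c^2*‖u‖^2 := by
    rw [hwc, real_inner_sub_sub_self, real_inner_smul_right, real_inner_smul_left,
      real_inner_smul_right, real_inner_self_eq_norm_sq, real_inner_self_eq_norm_sq]
    ring
  have hnw : ‖u‖ * ‖w‖ = ‖cross3 u v‖ := by
    have h1 : (‖u‖ * ‖w‖)^2 = ‖cross3 u v‖^2 := by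
      rw [norm_cross_sq, mul_pow, ← real_inner_self_eq_norm_sq w, e0, hc,
        real_inner_comm u v]
      set s := ⟪v, u⟫ with hs
      field_simp
      ring
    have h2 : 0 ≤ ‖u‖ * ‖w‖ := by positivity
    nlinarith [norm_nonneg (cross3 u v)]
  rw [cross3_smul_smul, hwc, cross3_sub_smul, ← hnw, mul_inv, ← hwc]

theorem stmt_18 (xi xj xk xl : E3)
    (hi : LinearIndependent ℝ ![xi - xj, xi - xk])
    (hj : LinearIndependent ℝ ![xj - xi, xj - xl]) :
    let u1 := xi - xj
    let v1 := xi - xk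
    let e11 := ‖u1‖⁻¹ • u1
    let e12 := ‖v1 - ⟪v1, e11⟫ • e11‖⁻¹ • (v1 - ⟪v1, e11⟫ • e11)
    let e13 := cross3 e11 e12
    let u2 := xj - xi
    let v2 := xj - xl
    let e21 := ‖u2‖⁻¹ • u2
    let e22 := ‖v2 - ⟪v2, e21⟫ • e21‖⁻¹ • (v2 - ⟪v2, e21⟫ • e21)
    let e23 := cross3 e21 e22
    ⟪e13, e23⟫ =
      ⟪cross3 u1 v1, cross3 u2 v2⟫ / (‖cross3 u1 v1‖ * ‖cross3 u2 v2‖) := by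
  intro u1 v1 e11 e12 e13 u2 v2 e21 e22 e23
  have k1 : e13 = ‖cross3 u1 v1‖⁻¹ • cross3 u1 v1 := key u1 v1 hi
  have k2 : e23 = ‖cross3 u2 v2‖⁻¹ • cross3 u2 v2 := key u2 v2 hj
  rw [k1, k2, real_inner_smul_left, real_inner_smul_right, div_eq_mul_inv, mul_inv]
  ring
end
end
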